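/- Let n ≥ 4 and let H(n) be the group presented by generators x_1,…,x_{2n} and relations H_orig(n). Then in H(n), for all 1 ≤ i < j ≤ n−2 with j−i ≥ 2, each of x_{2i-1} and x_{2i} commutes with each of x_{2j-1} and x_{2j}. -/
import Mathlib


/-- The descending product `X b * X (b-1) * ⋯ * X a` (equal to `1` when `b < a`). -/
def dprod {G : Type*} [Monoid G] (X : ℕ → G) (a b : ℕ) : G :=
  (((List.range' a (b + 1 - a)).reverse).map X).prod

/-- The set of relators expressing the cyclic system of relations
`[a₁, …, a_k]`, i.e. that all cyclic rotations of the product `a_k ⋯ a₁` are equal. -/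
def cycRels {G : Type*} [Group G] (l : List G) : Set G :=
  { r | ∃ k : ℕ, r = (l.rotate k).reverse.prod * (l.reverse.prod)⁻¹ }

/-- The `i`-th (1-based) generator of the free group on `Fin N`. -/
def gen (N : ℕ) (i : ℕ) : FreeGroup (Fin N) :=
  if h : 0 < N then FreeGroup.of ⟨(i - 1) % N, Nat.mod_lt _ h⟩ else 1

/-- The index set for the quadruples of type Q2: pairs `(i,j)` with `1 ≤ i < j ≤ n`,
`j - i > 1`, `i ≠ n-1`, `j ≠ n-1` and `(i,j) ≠ (n-2,n)`. -/
def QIdx (n : ℕ) : Set (ℕ × ℕ) :=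
  {p | 1 ≤ p.1 ∧ p.1 < p.2 ∧ p.2 ≤ n ∧ 1 < p.2 - p.1 ∧ p.1 ≠ n - 1 ∧ p.2 ≠ n - 1 ∧
       p ≠ (n - 2, n)}

/-- The relation set `H_orig(n)` on the generators `x₁, …, x₂ₙ`. -/
def Horig (n : ℕ) : Set (FreeGroup (Fin (2 * n))) :=
  let X : ℕ → FreeGroup (Fin (2 * n)) := gen (2 * n)
  -- (Q1)
  (⋃ i ∈ Set.Icc 2 (n - 2),
      (cycRels [X (2 * i), X (2 * n - 3)] ∪ cycRels [X (2 * i - 1), X (2 * n - 3)] ∪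
       cycRels [X (2 * i), (X (2 * n - 3))⁻¹ * X (2 * n - 2) * X (2 * n - 3)] ∪
       cycRels [X (2 * i - 1), (X (2 * n - 3))⁻¹ * X (2 * n - 2) * X (2 * n - 3)])) ∪
  -- (Q2)
  (⋃ p ∈ QIdx n,
      (cycRels [X (2 * p.1),
          (dprod X (2 * p.1 + 1) (2 * p.2 - 1))⁻¹ * X (2 * p.2) *
            dprod X (2 * p.1 + 1) (2 * p.2 - 1)] ∪
       cycRels [X (2 * p.1 - 1),
          (dprod X (2 * p.1) (2 * p.2 - 1))⁻¹ * X (2 * p.2) *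
            dprod X (2 * p.1) (2 * p.2 - 1)] ∪
       cycRels [X (2 * p.1),
          (dprod X (2 * p.1 + 1) (2 * p.2 - 2))⁻¹ * X (2 * p.2 - 1) *
            dprod X (2 * p.1 + 1) (2 * p.2 - 2)] ∪
       cycRels [X (2 * p.1 - 1),
          (dprod X (2 * p.1) (2 * p.2 - 2))⁻¹ * X (2 * p.2 - 1) *
            dprod X (2 * p.1) (2 * p.2 - 2)])) ∪
  -- (T1)
  (cycRels [X 2, X (2 * n - 3)] ∪ cycRels [X 1, X (2 * n - 3)] ∪
   cycRels [X 1, X 2, (X (2 * n - 3))⁻¹ * X (2 * n - 2) * X (2 * n - 3)]) ∪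
  -- (T2)
  (⋃ i ∈ Set.Icc 1 (n - 3),
      (cycRels [X (2 * i) * X (2 * i - 1) * (X (2 * i))⁻¹, X (2 * i + 1), X (2 * i + 2)] ∪
       cycRels [X (2 * i), X (2 * i + 2)] ∪ cycRels [X (2 * i), X (2 * i + 1)])) ∪
  -- (T3)
  (cycRels [(X (2 * n - 2) * X (2 * n - 3) * X (2 * n - 4)) * X (2 * n - 5) *
        (X (2 * n - 2) * X (2 * n - 3) * X (2 * n - 4))⁻¹, X (2 * n - 1), X (2 * n)] ∪
   cycRels [X (2 * n - 4),
      (X (2 * n - 2) * X (2 * n - 3))⁻¹ * X (2 * n) * (X (2 * n - 2) * X (2 * n - 3))] ∪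
   cycRels [X (2 * n - 4),
      (X (2 * n - 2) * X (2 * n - 3))⁻¹ * X (2 * n - 1) * (X (2 * n - 2) * X (2 * n - 3))]) ∪
  -- (T4)
  (cycRels [X (2 * n - 2), X (2 * n)] ∪ cycRels [X (2 * n - 3), X (2 * n)] ∪
   cycRels [X (2 * n - 3), X (2 * n - 2), X (2 * n - 1)])

section Memb
variable (n : ℕ)

theorem Q2_sub {p : ℕ × ℕ} (hp : p ∈ QIdx n) :
    (cycRels [gen (2*n) (2 * p.1),
        (dprod (gen (2*n)) (2 * p.1 + 1) (2 * p.2 - 1))⁻¹ * gen (2*n) (2 * p.2) *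
          dprod (gen (2*n)) (2 * p.1 + 1) (2 * p.2 - 1)] ∪
     cycRels [gen (2*n) (2 * p.1 - 1),
        (dprod (gen (2*n)) (2 * p.1) (2 * p.2 - 1))⁻¹ * gen (2*n) (2 * p.2) *
          dprod (gen (2*n)) (2 * p.1) (2 * p.2 - 1)] ∪
     cycRels [gen (2*n) (2 * p.1),
        (dprod (gen (2*n)) (2 * p.1 + 1) (2 * p.2 - 2))⁻¹ * gen (2*n) (2 * p.2 - 1) *
          dprod (gen (2*n)) (2 * p.1 + 1) (2 * p.2 - 2)] ∪
     cycRels [gen (2*n) (2 * p.1 - 1),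
        (dprod (gen (2*n)) (2 * p.1) (2 * p.2 - 2))⁻¹ * gen (2*n) (2 * p.2 - 1) *
          dprod (gen (2*n)) (2 * p.1) (2 * p.2 - 2)]) ⊆ Horig n := by
  intro r hr
  unfold Horig
  simp only [Set.mem_union, Set.mem_iUnion]
  exact Or.inl (Or.inl (Or.inl (Or.inl (Or.inr ⟨p, hp, hr⟩))))

theorem T2_sub {i : ℕ} (hi : i ∈ Set.Icc 1 (n - 3)) :
    (cycRels [gen (2*n) (2 * i) * gen (2*n) (2 * i - 1) * (gen (2*n) (2 * i))⁻¹,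
        gen (2*n) (2 * i + 1), gen (2*n) (2 * i + 2)] ∪
     cycRels [gen (2*n) (2 * i), gen (2*n) (2 * i + 2)] ∪
     cycRels [gen (2*n) (2 * i), gen (2*n) (2 * i + 1)]) ⊆ Horig n := by
  intro r hr
  unfold Horig
  simp only [Set.mem_union, Set.mem_iUnion]
  exact Or.inl (Or.inl (Or.inr ⟨i, hi, hr⟩))

end Memb

section MainAux

theorem map_dprod {G H : Type*} [Monoid G] [Monoid H] (f : G →* H) (X : ℕ → G) (a b : ℕ) :
    f (dprod X a b) = dprod (fun k => f (X k)) a b := by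
  unfold dprod
  rw [map_list_prod, List.map_map]
  rfl

theorem conj_eq_self {G : Type*} [Group G] {g W : G} (h : Commute g W) :
    W * g * W⁻¹ = g := by
  rw [← h.eq]
  group

theorem commute_conj_mp {G : Type*} [Group G] {g z W : G}
    (h : Commute g (W⁻¹ * z * W)) : Commute (W * g * W⁻¹) z := by
  show W * g * W⁻¹ * z = z * (W * g * W⁻¹)
  calc W * g * W⁻¹ * z = W * (g * (W⁻¹ * z * W)) * W⁻¹ := by group
    _ = W * ((W⁻¹ * z * W) * g) * W⁻¹ := by rw [h.eq]
    _ = z * (W * g * W⁻¹) := by group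

theorem commute_unconj {G : Type*} [Group G] {g z W : G} (h1 : Commute g (W⁻¹ * z * W))
    (h2 : Commute g W) : Commute g z := by
  have h3 : Commute g (W * ((W⁻¹ * z * W) * W⁻¹)) :=
    h2.mul_right (h1.mul_right h2.inv_right)
  have e : W * ((W⁻¹ * z * W) * W⁻¹) = z := by group
  rwa [e] at h3

theorem commute_of_conj_comm {G : Type*} [Group G] {g z w : G}
    (h1 : Commute (w * g * w⁻¹) z) (h2 : Commute w z) : Commute g z := by
  have h4 : Commute ((w⁻¹ * (w * g * w⁻¹)) * w) z := (h2.inv_left.mul_left h1).mul_left h2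
  have e : (w⁻¹ * (w * g * w⁻¹)) * w = g := by group
  rwa [e] at h4

end MainAux

/-- The simplified (conjugation-free) relation set `H_simp(n)` on the generators `x₁, …, x₂ₙ`. -/
def Hsimp (n : ℕ) : Set (FreeGroup (Fin (2 * n))) :=
  let X : ℕ → FreeGroup (Fin (2 * n)) := gen (2 * n)
  -- (Q1')
  (⋃ i ∈ Set.Icc 2 (n - 2), ⋃ a ∈ ({2 * i - 1, 2 * i} : Set ℕ),
      ⋃ b ∈ ({2 * n - 3, 2 * n - 2} : Set ℕ), cycRels [X a, X b]) ∪
  -- (Q2')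
  (⋃ p ∈ QIdx n, ⋃ a ∈ ({2 * p.1 - 1, 2 * p.1} : Set ℕ),
      ⋃ b ∈ ({2 * p.2 - 1, 2 * p.2} : Set ℕ), cycRels [X a, X b]) ∪
  -- (T1')
  (cycRels [X 1, X (2 * n - 3)] ∪ cycRels [X 2, X (2 * n - 3)] ∪
   cycRels [X 1, X 2, X (2 * n - 2)]) ∪
  -- (T2')
  (⋃ i ∈ Set.Icc 1 (n - 3),
      (cycRels [X (2 * i - 1), X (2 * i + 1), X (2 * i + 2)] ∪
       cycRels [X (2 * i), X (2 * i + 1)] ∪ cycRels [X (2 * i), X (2 * i + 2)])) ∪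
  -- (T3')
  (cycRels [X (2 * n - 4), X (2 * n - 1)] ∪ cycRels [X (2 * n - 4), X (2 * n)] ∪
   cycRels [X (2 * n - 5), X (2 * n - 1), X (2 * n)]) ∪
  -- (T4')
  (cycRels [X (2 * n - 2), X (2 * n)] ∪ cycRels [X (2 * n - 3), X (2 * n)] ∪
   cycRels [X (2 * n - 3), X (2 * n - 2), X (2 * n - 1)])

section Helpers

theorem dprod_of_lt {G : Type*} [Monoid G] (X : ℕ → G) {a b : ℕ} (h : b < a) :
    dprod X a b = 1 := by
  unfold dprod
  have : b + 1 - a = 0 := by omega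
  simp [this]

theorem dprod_succ {G : Type*} [Monoid G] (X : ℕ → G) {a b : ℕ} (h : a ≤ b + 1) :
    dprod X a (b + 1) = X (b + 1) * dprod X a b := by
  unfold dprod
  have h1 : b + 1 + 1 - a = (b + 1 - a) + 1 := by omega
  have h2 : a + (b + 1 - a) = b + 1 := by omega
  rw [h1, List.range'_1_concat, h2]
  simp

theorem dprod_self {G : Type*} [Monoid G] (X : ℕ → G) (a : ℕ) : dprod X a a = X a := by
  unfold dprod
  have : a + 1 - a = 1 := by omega
  simp [this]

theorem commute_dprod {G : Type*} [Monoid G] (X : ℕ → G) (g : G) (a b : ℕ)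
    (h : ∀ k, a ≤ k → k ≤ b → Commute g (X k)) : Commute g (dprod X a b) := by
  induction b with
  | zero =>
    rcases Nat.eq_zero_or_pos a with ha | ha
    · subst ha
      rw [dprod_self]
      exact h 0 le_rfl le_rfl
    · rw [dprod_of_lt X ha]; exact Commute.one_right g
  | succ b ih =>
    rcases le_or_gt a (b + 1) with h1 | h1
    · rw [dprod_succ X h1]
      exact (h _ h1 le_rfl).mul_right (ih fun k hk hk' => h k hk (hk'.trans (Nat.le_succ b)))
    · rw [dprod_of_lt X h1]; exact Commute.one_right g

theorem dprod_split {G : Type*} [Monoid G] (X : ℕ → G) {a b c : ℕ}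
    (h1 : a ≤ c + 1) (h2 : c ≤ b) : dprod X a b = dprod X (c + 1) b * dprod X a c := by
  induction b, h2 using Nat.le_induction with
  | base => rw [dprod_of_lt X (Nat.lt_succ_self c), one_mul]
  | succ b hb ih =>
    rw [dprod_succ X (h1.trans (by omega)), ih, dprod_succ X (by omega), mul_assoc]

theorem pair_mem_cycRels {G : Type*} [Group G] (a b : G) :
    a * b * (b * a)⁻¹ ∈ cycRels [a, b] :=
  ⟨1, by simp [List.rotate]⟩

theorem triple_mem_cycRels {G : Type*} [Group G] (a b c : G) :
    a * c * b * (c * b * a)⁻¹ ∈ cycRels [a, b, c] :=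
  ⟨1, by simp [List.rotate, mul_assoc]⟩

theorem mk_rel_one {α : Type*} {rels : Set (FreeGroup α)} {r : FreeGroup α} (h : r ∈ rels) :
    PresentedGroup.mk rels r = 1 :=
  (QuotientGroup.eq_one_iff r).2 (Subgroup.subset_normalClosure h)

theorem commute_of_pair_rel {α : Type*} {rels : Set (FreeGroup α)} {a b : FreeGroup α}
    (h : cycRels [a, b] ⊆ rels) :
    Commute (PresentedGroup.mk rels a) (PresentedGroup.mk rels b) := by
  have := mk_rel_one (h (pair_mem_cycRels a b))
  simp only [map_mul, map_inv, mul_inv_eq_one] at this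
  exact this

theorem commute_of_triple_rel {α : Type*} {rels : Set (FreeGroup α)} {a b c : FreeGroup α}
    (h : cycRels [a, b, c] ⊆ rels) :
    Commute (PresentedGroup.mk rels a)
      (PresentedGroup.mk rels c * PresentedGroup.mk rels b) := by
  have := mk_rel_one (h (triple_mem_cycRels a b c))
  simp only [map_mul, map_inv, mul_inv_eq_one] at this
  unfold Commute SemiconjBy
  rw [← mul_assoc]
  exact this

end Helpers

/-- The image of the `i`-th (1-based) generator `xᵢ` in the presented group
`H(n) = ⟨x₁,…,x₂ₙ ∣ H_orig(n)⟩`. -/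
def genH (n : ℕ) (i : ℕ) : PresentedGroup (Horig n) :=
  PresentedGroup.mk (Horig n) (gen (2 * n) i)

theorem mem_QIdx (n : ℕ) (hn : 4 ≤ n) {i j : ℕ} (h1 : 1 ≤ i) (h2 : i < j)
    (h3 : j ≤ n - 2) (h4 : 2 ≤ j - i) : (i, j) ∈ QIdx n := by
  simp only [QIdx, Set.mem_setOf_eq, ne_eq, Prod.mk.injEq, not_and]
  omega

theorem Q2_rels (n : ℕ) {i j : ℕ} (hp : (i, j) ∈ QIdx n) :
    Commute (genH n (2 * i)) ((dprod (genH n) (2 * i + 1) (2 * j - 1))⁻¹ * genH n (2 * j) *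
        dprod (genH n) (2 * i + 1) (2 * j - 1)) ∧
    Commute (genH n (2 * i - 1)) ((dprod (genH n) (2 * i) (2 * j - 1))⁻¹ * genH n (2 * j) *
        dprod (genH n) (2 * i) (2 * j - 1)) ∧
    Commute (genH n (2 * i)) ((dprod (genH n) (2 * i + 1) (2 * j - 2))⁻¹ * genH n (2 * j - 1) *
        dprod (genH n) (2 * i + 1) (2 * j - 2)) ∧
    Commute (genH n (2 * i - 1)) ((dprod (genH n) (2 * i) (2 * j - 2))⁻¹ * genH n (2 * j - 1) *
        dprod (genH n) (2 * i) (2 * j - 2)) := by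
  have key : ∀ (u v w a : ℕ),
      cycRels [gen (2 * n) a,
        (dprod (gen (2 * n)) u v)⁻¹ * gen (2 * n) w * dprod (gen (2 * n)) u v] ⊆ Horig n →
      Commute (genH n a) ((dprod (genH n) u v)⁻¹ * genH n w * dprod (genH n) u v) := by
    intro u v w a hsub
    have base := commute_of_pair_rel hsub
    have e : PresentedGroup.mk (Horig n)
        ((dprod (gen (2 * n)) u v)⁻¹ * gen (2 * n) w * dprod (gen (2 * n)) u v) =
        (dprod (genH n) u v)⁻¹ * genH n w * dprod (genH n) u v := by
      rw [map_mul, map_mul, map_inv, map_dprod]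
      rfl
    rwa [e] at base
  refine ⟨key _ _ _ _ ?_, key _ _ _ _ ?_, key _ _ _ _ ?_, key _ _ _ _ ?_⟩
  · exact fun r hr => Q2_sub n hp
      (Set.mem_union_left _ (Set.mem_union_left _ (Set.mem_union_left _ hr)))
  · exact fun r hr => Q2_sub n hp
      (Set.mem_union_left _ (Set.mem_union_left _ (Set.mem_union_right _ hr)))
  · exact fun r hr => Q2_sub n hp (Set.mem_union_left _ (Set.mem_union_right _ hr))
  · exact fun r hr => Q2_sub n hp (Set.mem_union_right _ hr)

theorem T2_rels (n : ℕ) {i : ℕ} (hi : i ∈ Set.Icc 1 (n - 3)) :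
    Commute (genH n (2 * i)) (genH n (2 * i + 1)) ∧
    Commute (genH n (2 * i)) (genH n (2 * i + 2)) ∧
    Commute (genH n (2 * i) * genH n (2 * i - 1) * (genH n (2 * i))⁻¹)
      (genH n (2 * i + 2) * genH n (2 * i + 1)) := by
  refine ⟨?_, ?_, ?_⟩
  · exact commute_of_pair_rel (fun r hr => T2_sub n hi (Set.mem_union_right _ hr))
  · exact commute_of_pair_rel (fun r hr => T2_sub n hi
      (Set.mem_union_left _ (Set.mem_union_right _ hr)))
  · have base := commute_of_triple_rel (fun r hr => T2_sub n hi
      (Set.mem_union_left _ (Set.mem_union_left _ hr)))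
    have e : PresentedGroup.mk (Horig n)
        (gen (2 * n) (2 * i) * gen (2 * n) (2 * i - 1) * (gen (2 * n) (2 * i))⁻¹) =
        genH n (2 * i) * genH n (2 * i - 1) * (genH n (2 * i))⁻¹ := by
      rw [map_mul, map_mul, map_inv]
      rfl
    rwa [e] at base


theorem core_comm (n : ℕ) (hn : 4 ≤ n) :
    ∀ j i : ℕ, 1 ≤ i → i < j → j ≤ n - 2 → 2 ≤ j - i →
      ((Commute (genH n (2 * i - 1)) (genH n (2 * j - 1)) ∧
        Commute (genH n (2 * i - 1)) (genH n (2 * j))) ∧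
       (Commute (genH n (2 * i)) (genH n (2 * j - 1)) ∧
        Commute (genH n (2 * i)) (genH n (2 * j)))) := by
  intro j
  induction j using Nat.strong_induction_on with
  | _ j IH =>
  intro i hi hij hjn hgap
  set Y : ℕ → PresentedGroup (Horig n) := genH n with hY
  -- T2 relations at index i
  have hiT2 : i ∈ Set.Icc 1 (n - 3) := by
    simp only [Set.mem_Icc]; omega
  obtain ⟨c1, c2, c3⟩ := T2_rels n hiT2
  -- Q2 relations at (i, j)
  obtain ⟨R1, R2, R3, R4⟩ := Q2_rels n (mem_QIdx n hn hi hij hjn hgap)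
  -- Commutation of Y (2i) with all intermediate generators up to 2j-2
  have Hmid : ∀ k, 2 * i + 1 ≤ k → k ≤ 2 * j - 2 → Commute (Y (2 * i)) (Y k) := by
    intro k hk1 hk2
    rcases Nat.even_or_odd k with ⟨m, hm⟩ | ⟨m, hm⟩
    · -- k = 2m
      rcases eq_or_lt_of_le (show i + 1 ≤ m by omega) with hm2 | hm2
      · have : k = 2 * i + 2 := by omega
        rw [this]; exact c2
      · have : k = 2 * m := by omega
        rw [this]
        exact (IH m (by omega) i hi (by omega) (by omega) (by omega)).2.2
    · -- k = 2m + 1 = 2(m+1) - 1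
      rcases eq_or_lt_of_le (show i ≤ m by omega) with hm2 | hm2
      · have : k = 2 * i + 1 := by omega
        rw [this]; exact c1
      · have : k = 2 * (m + 1) - 1 := by omega
        rw [this]
        exact (IH (m + 1) (by omega) i hi (by omega) (by omega) (by omega)).2.1
  -- Commutation of Y (2i-1) with intermediate generators from 2i+3 up to 2j-2
  have Hmid2 : ∀ k, 2 * i + 3 ≤ k → k ≤ 2 * j - 2 → Commute (Y (2 * i - 1)) (Y k) := by
    intro k hk1 hk2
    rcases Nat.even_or_odd k with ⟨m, hm⟩ | ⟨m, hm⟩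
    · have : k = 2 * m := by omega
      rw [this]
      exact (IH m (by omega) i hi (by omega) (by omega) (by omega)).1.2
    · have : k = 2 * (m + 1) - 1 := by omega
      rw [this]
      exact (IH (m + 1) (by omega) i hi (by omega) (by omega) (by omega)).1.1
  -- Step 1 : Y (2i) commutes with Y (2j-1)
  have s1 : Commute (Y (2 * i)) (Y (2 * j - 1)) :=
    commute_unconj R3 (commute_dprod Y _ _ _ Hmid)
  -- Step 2 : Y (2i) commutes with Y (2j)
  have s2 : Commute (Y (2 * i)) (Y (2 * j)) := by
    refine commute_unconj R1 (commute_dprod Y _ _ _ ?_)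
    intro k hk1 hk2
    rcases eq_or_lt_of_le hk2 with hk3 | hk3
    · rw [hk3]; exact s1
    · exact Hmid k hk1 (by omega)
  -- The conjugated element A' = Y(2i) Y(2i-1) Y(2i)⁻¹
  set A : PresentedGroup (Horig n) := Y (2 * i) * Y (2 * i - 1) * (Y (2 * i))⁻¹ with hA
  have hAcomm : ∀ k, Commute (Y (2 * i)) (Y k) → Commute (Y (2 * i - 1)) (Y k) →
      Commute A (Y k) := fun k h1 h2 => (h1.mul_left h2).mul_left h1.inv_left
  -- key step : from a fourth-type relation conclude Commute A z
  have key : ∀ b z, 2 * i + 2 ≤ b →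
      (∀ k, 2 * i + 3 ≤ k → k ≤ b → Commute A (Y k)) →
      Commute (Y (2 * i - 1)) ((dprod Y (2 * i) b)⁻¹ * z * dprod Y (2 * i) b) →
      Commute A z := by
    intro b z hb hcomm hrel
    have hsplit : dprod Y (2 * i) b = dprod Y (2 * i + 3) b * dprod Y (2 * i) (2 * i + 2) :=
      dprod_split Y (by omega) (by omega)
    have hT : dprod Y (2 * i) (2 * i + 2) = Y (2 * i + 2) * Y (2 * i + 1) * Y (2 * i) := by
      have e1 : 2 * i + 2 = (2 * i + 1) + 1 := by omega
      rw [e1, dprod_succ Y (by omega)]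
      have e2 : 2 * i + 1 = (2 * i) + 1 := by omega
      rw [e2, dprod_succ Y (by omega), dprod_self, ← mul_assoc]
    have hU : Commute A (dprod Y (2 * i + 3) b) :=
      commute_dprod Y A _ _ hcomm
    have hW : dprod Y (2 * i) b * Y (2 * i - 1) * (dprod Y (2 * i) b)⁻¹ = A := by
      rw [hsplit, hT]
      set U := dprod Y (2 * i + 3) b
      have e : (U * (Y (2 * i + 2) * Y (2 * i + 1) * Y (2 * i))) * Y (2 * i - 1) *
          (U * (Y (2 * i + 2) * Y (2 * i + 1) * Y (2 * i)))⁻¹ =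
          U * ((Y (2 * i + 2) * Y (2 * i + 1)) * A * (Y (2 * i + 2) * Y (2 * i + 1))⁻¹) * U⁻¹ := by
        rw [hA]; group
      rw [e, conj_eq_self c3, conj_eq_self hU]
    have := commute_conj_mp hrel
    rwa [hW] at this
  -- Step 3 : Y (2i-1) commutes with Y (2j-1)
  have hA3 : Commute A (Y (2 * j - 1)) := by
    refine key (2 * j - 2) (Y (2 * j - 1)) (by omega) ?_ R4
    intro k hk1 hk2
    exact hAcomm k (Hmid k (by omega) hk2) (Hmid2 k hk1 hk2)
  have s3 : Commute (Y (2 * i - 1)) (Y (2 * j - 1)) := by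
    refine commute_of_conj_comm (g := Y (2 * i - 1)) (w := Y (2 * i)) ?_ s1
    exact hA3
  -- Step 4 : Y (2i-1) commutes with Y (2j)
  have hA4 : Commute A (Y (2 * j)) := by
    refine key (2 * j - 1) (Y (2 * j)) (by omega) ?_ R2
    intro k hk1 hk2
    rcases eq_or_lt_of_le hk2 with hk3 | hk3
    · rw [hk3]; exact hAcomm _ s1 s3
    · exact hAcomm k (Hmid k (by omega) (by omega)) (Hmid2 k hk1 (by omega))
  have s4 : Commute (Y (2 * i - 1)) (Y (2 * j)) :=
    commute_of_conj_comm (g := Y (2 * i - 1)) (w := Y (2 * i)) hA4 s2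
  exact ⟨⟨s3, s4⟩, ⟨s1, s2⟩⟩

/-- In `H(n) = ⟨x₁,…,x₂ₙ ∣ H_orig(n)⟩`, for all `1 ≤ i < j ≤ n-2` with `j - i ≥ 2`,
each of `x₂ᵢ₋₁, x₂ᵢ` commutes with each of `x₂ⱼ₋₁, x₂ⱼ`. -/
theorem Q2_simplified (n : ℕ) (hn : 4 ≤ n) (i j : ℕ)
    (hij : 1 ≤ i ∧ i < j ∧ j ≤ n - 2 ∧ 2 ≤ j - i) :
    ∀ a ∈ ({2 * i - 1, 2 * i} : Set ℕ), ∀ b ∈ ({2 * j - 1, 2 * j} : Set ℕ),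
      genH n a * genH n b = genH n b * genH n a := by
  obtain ⟨h1, h2, h3, h4⟩ := hij
  obtain ⟨⟨s3, s4⟩, s1, s2⟩ := core_comm n hn j i h1 h2 h3 h4
  intro a ha b hb
  simp only [Set.mem_insert_iff, Set.mem_singleton_iff] at ha hb
  rcases ha with ha | ha <;> rcases hb with hb | hb <;> subst ha <;> subst hb
  · exact s3.eq
  · exact s4.eq
  · exact s1.eq
  · exact s2.eq
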